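/- Let F : X ⇒ Y be a set-valued mapping between metric spaces and (x̄, ȳ) ∈ graph F. Then F is strongly metrically regular near (x̄, ȳ) if and only if F⁻¹ has a Lipschitz localization near (ȳ, x̄), i.e., there exist ε, δ > 0 such that y ↦ F⁻¹(y) ∩ B(x̄, ε) is single-valued and Lipschitz continuous on B(ȳ, δ). -/

import Mathlib

open EMetric ENNReal NNReal

/-- Strong metric regularity is equivalent to existence of a Lipschitz
localization of the inverse: `F` is strongly metrically regular near
`(xb, yb) ∈ graph F` iff there are `ε, δ > 0` such that
`y ↦ F⁻¹(y) ∩ B(xb, ε)` is single-valued and Lipschitz on `B(yb, δ)`. -/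
theorem strong_regularity_iff_lipschitz_localization {X Y : Type*}
    [MetricSpace X] [MetricSpace Y]
    (F : X → Set Y) (xb : X) (yb : Y) (hxy : yb ∈ F xb) :
    (∃ ε > (0:ℝ), ∃ δ > (0:ℝ), ∃ K : ℝ≥0,
      (∀ y ∈ Metric.closedBall yb δ, ∃ x ∈ Metric.closedBall xb ε, y ∈ F x) ∧
      (∀ x ∈ Metric.closedBall xb ε, ∀ u ∈ Metric.closedBall xb ε,
        ∀ y ∈ F u, y ∈ Metric.closedBall yb δ →
          edist x u ≤ (K : ℝ≥0∞) * infEdist y (F x)))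
    ↔
    (∃ ε > (0:ℝ), ∃ δ > (0:ℝ), ∃ G : Y → X, ∃ K : ℝ≥0,
      LipschitzOnWith K G (Metric.closedBall yb δ) ∧
      ∀ y ∈ Metric.closedBall yb δ,
        {x : X | y ∈ F x} ∩ Metric.closedBall xb ε = {G y}) := by
  constructor
  · rintro ⟨ε, hε, δ, hδ, K, hsurj, hreg⟩
    -- uniqueness
    have huniq : ∀ y ∈ Metric.closedBall yb δ, ∀ x₁ ∈ Metric.closedBall xb ε,
        ∀ x₂ ∈ Metric.closedBall xb ε, y ∈ F x₁ → y ∈ F x₂ → x₁ = x₂ := by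
      intro y hy x₁ hx₁ x₂ hx₂ hy₁ hy₂
      have h := hreg x₁ hx₁ x₂ hx₂ y hy₂ hy
      rw [EMetric.infEdist, infEdist_zero_of_mem hy₁, mul_zero, le_zero_iff, edist_eq_zero] at h
      exact h
    classical
    set G : Y → X := fun y =>
      if h : ∃ x ∈ Metric.closedBall xb ε, y ∈ F x then h.choose else xb with hG
    have hGspec : ∀ y ∈ Metric.closedBall yb δ,
        G y ∈ Metric.closedBall xb ε ∧ y ∈ F (G y) := by
      intro y hy
      have h := hsurj y hy
      simp only [hG, dif_pos h]
      exact h.choose_spec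
    refine ⟨ε, hε, δ, hδ, G, K, ?_, ?_⟩
    · intro y₁ hy₁ y₂ hy₂
      obtain ⟨hG₁, hF₁⟩ := hGspec y₁ hy₁
      obtain ⟨hG₂, hF₂⟩ := hGspec y₂ hy₂
      calc edist (G y₁) (G y₂) ≤ (K : ℝ≥0∞) * infEdist y₂ (F (G y₁)) :=
            hreg (G y₁) hG₁ (G y₂) hG₂ y₂ hF₂ hy₂
        _ ≤ (K : ℝ≥0∞) * edist y₂ y₁ :=
            mul_le_mul_right (infEdist_le_edist_of_mem hF₁) _
        _ = (K : ℝ≥0∞) * edist y₁ y₂ := by rw [edist_comm]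
    · intro y hy
      obtain ⟨hG₁, hF₁⟩ := hGspec y hy
      ext x
      simp only [Set.mem_inter_iff, Set.mem_setOf_eq, Set.mem_singleton_iff]
      constructor
      · rintro ⟨hxF, hxb⟩
        exact huniq y hy x hxb (G y) hG₁ hxF hF₁
      · rintro rfl
        exact ⟨hF₁, hG₁⟩
  · rintro ⟨ε, hε, δ, hδ, G, K, hLip, hsing⟩
    refine ⟨ε, hε, δ/2, by positivity, K + Real.toNNReal (4*ε/δ), ?_, ?_⟩
    · intro y hy
      have hy' : y ∈ Metric.closedBall yb δ :=
        Metric.closedBall_subset_closedBall (by linarith) hy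
      have h := hsing y hy'
      have : G y ∈ {x : X | y ∈ F x} ∩ Metric.closedBall xb ε := by
        rw [h]; rfl
      exact ⟨G y, this.2, this.1⟩
    · intro x hx u hu y hyFu hy
      have hy' : y ∈ Metric.closedBall yb δ :=
        Metric.closedBall_subset_closedBall (by linarith) hy
      have huG : u = G y := by
        have : u ∈ {x : X | y ∈ F x} ∩ Metric.closedBall xb ε := ⟨hyFu, hu⟩
        rwa [hsing y hy', Set.mem_singleton_iff] at this
      set K' : ℝ≥0 := K + Real.toNNReal (4*ε/δ) with hK'
      have hK'0 : (K' : ℝ≥0∞) ≠ 0 := by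
        simp only [hK', ENNReal.coe_ne_zero]
        intro hc
        have : Real.toNNReal (4*ε/δ) = 0 := by
          have := add_eq_zero.mp hc
          exact this.2
        rw [Real.toNNReal_eq_zero] at this
        nlinarith [div_pos (by linarith : (0:ℝ) < 4*ε) hδ]
      have hK't : (K' : ℝ≥0∞) ≠ ⊤ := ENNReal.coe_ne_top
      -- key: edist x u / K' ≤ infEdist y (F x)
      have key : edist x u / (K' : ℝ≥0∞) ≤ infEdist y (F x) := by
        rw [EMetric.infEdist, le_infEdist]
        intro y' hy'Fx
        rw [ENNReal.div_le_iff_le_mul (Or.inl hK'0) (Or.inl hK't)]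
        by_cases hball : y' ∈ Metric.closedBall yb δ
        · have hxG : x = G y' := by
            have : x ∈ {z : X | y' ∈ F z} ∩ Metric.closedBall xb ε := ⟨hy'Fx, hx⟩
            rwa [hsing y' hball, Set.mem_singleton_iff] at this
          calc edist x u = edist (G y') (G y) := by rw [hxG, huG]
            _ ≤ (K : ℝ≥0∞) * edist y' y := hLip hball hy'
            _ ≤ (K' : ℝ≥0∞) * edist y' y := by
                exact mul_le_mul_left (ENNReal.coe_le_coe.mpr le_self_add) _
            _ = edist y y' * (K' : ℝ≥0∞) := by rw [edist_comm, mul_comm]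
        · -- y' is far: dist y y' ≥ δ/2
          have hfar : δ/2 ≤ dist y y' := by
            rw [Metric.mem_closedBall, not_le] at hball
            have h1 : dist y yb ≤ δ/2 := Metric.mem_closedBall.mp hy
            have := dist_triangle y' y yb
            rw [dist_comm y' y] at this
            linarith
          have h1 : edist x u ≤ ENNReal.ofReal (2*ε) := by
            calc edist x u ≤ edist x xb + edist xb u := edist_triangle _ _ _
              _ ≤ ENNReal.ofReal ε + ENNReal.ofReal ε := by
                  gcongr
                  · rw [edist_dist]
                    exact ENNReal.ofReal_le_ofReal (Metric.mem_closedBall.mp hx)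
                  · rw [edist_dist, dist_comm]
                    exact ENNReal.ofReal_le_ofReal (Metric.mem_closedBall.mp hu)
              _ = ENNReal.ofReal (2*ε) := by
                  rw [← ENNReal.ofReal_add (le_of_lt hε) (le_of_lt hε)]; ring_nf
          have h2 : ENNReal.ofReal (2*ε) ≤ edist y y' * (K' : ℝ≥0∞) := by
            have hc : ENNReal.ofReal (4*ε/δ) ≤ (K' : ℝ≥0∞) := by
              rw [ENNReal.ofReal]
              exact ENNReal.coe_le_coe.mpr le_add_self
            have hd : ENNReal.ofReal (δ/2) ≤ edist y y' := by
              rw [edist_dist]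
              exact ENNReal.ofReal_le_ofReal hfar
            calc ENNReal.ofReal (2*ε) = ENNReal.ofReal (δ/2 * (4*ε/δ)) := by
                  rw [show δ/2 * (4*ε/δ) = 2*ε by field_simp; ring]
              _ = ENNReal.ofReal (δ/2) * ENNReal.ofReal (4*ε/δ) :=
                  ENNReal.ofReal_mul (by linarith)
              _ ≤ edist y y' * (K' : ℝ≥0∞) := mul_le_mul' hd hc
          exact h1.trans h2
      calc edist x u = (K' : ℝ≥0∞) * (edist x u / (K' : ℝ≥0∞)) :=
            (ENNReal.mul_div_cancel hK'0 hK't).symm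
        _ ≤ (K' : ℝ≥0∞) * infEdist y (F x) := mul_le_mul_right key _
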